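/- Existential quantifier commutes into the p-box: for every valuation ε, pGCL program s, well-formed pDL formula φ, logical variable l, and expectation lower bound p, if ε ⊨ ∃l·[s]_p φ (i.e., ε ⊨ ([s]_p φ)[l:=v] for some v in the domain of l), then ε ⊨ [s]_p (∃l·φ). -/
import Mathlib


namespace PGCL

/-- Program valuations: maps from program variables to real values. -/
abbrev PVal : Type := String → ℝ

/-- Logical environments: maps from logical variables to their values.
    Logical variables are disjoint from program variables and cannot be
    accessed by programs. -/
abbrev LEnv : Type := String → ℝ

/-- Syntax of the probabilistic guarded command language pGCL.
    Expressions are embedded shallowly as functions of the valuation. -/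
inductive Stmt : Type
  | skip : Stmt
  | assign (x : String) (e : PVal → ℝ) : Stmt
  | seq (s₁ s₂ : Stmt) : Stmt
  /-- demonic (non-deterministic) choice `s₁ ⊓ s₂` -/
  | dem (s₁ s₂ : Stmt) : Stmt
  /-- probabilistic choice `s₁ [e] s₂` -/
  | prob (e : PVal → ℝ) (s₁ s₂ : Stmt) : Stmt
  | ifte (e : PVal → Bool) (s₁ s₂ : Stmt) : Stmt
  | whileLoop (e : PVal → Bool) (s : Stmt) : Stmt

/-- States of the MDP semantics: a valuation paired with the remaining program.
    `(ε, Stmt.skip)` is final. -/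
abbrev PState : Type := PVal × Stmt

/-- A positional policy resolves each demonic choice (true = left branch). -/
abbrev Policy : Type := PState → Bool

/-- One-step transition relation of the MDP semantics of pGCL, under policy `π`:
    `Step π σ p σ'` means σ steps to σ' with probability `p`. -/
inductive Step (π : Policy) : PState → ℝ → PState → Prop
  | assign {ε : PVal} {x : String} {e : PVal → ℝ} :
      Step π (ε, Stmt.assign x e) 1 (Function.update ε x (e ε), Stmt.skip)
  | seqSkip {ε ε' : PVal} {s₁ s₂ : Stmt} {p : ℝ} :
      Step π (ε, s₁) p (ε', s₂) → Step π (ε, Stmt.seq Stmt.skip s₁) p (ε', s₂)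
  | seqStep {ε ε' : PVal} {s₁ s₂ s : Stmt} {p : ℝ} :
      Step π (ε, s₁) p (ε', s₂) → Step π (ε, Stmt.seq s₁ s) p (ε', Stmt.seq s₂ s)
  | probL {ε : PVal} {e : PVal → ℝ} {s₁ s₂ : Stmt} :
      0 ≤ e ε → e ε ≤ 1 → Step π (ε, Stmt.prob e s₁ s₂) (e ε) (ε, s₁)
  | probR {ε : PVal} {e : PVal → ℝ} {s₁ s₂ : Stmt} :
      0 ≤ e ε → e ε ≤ 1 → Step π (ε, Stmt.prob e s₁ s₂) (1 - e ε) (ε, s₂)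
  | demL {ε : PVal} {s₁ s₂ : Stmt} :
      π (ε, Stmt.dem s₁ s₂) = true → Step π (ε, Stmt.dem s₁ s₂) 1 (ε, s₁)
  | demR {ε : PVal} {s₁ s₂ : Stmt} :
      π (ε, Stmt.dem s₁ s₂) = false → Step π (ε, Stmt.dem s₁ s₂) 1 (ε, s₂)
  | iteT {ε : PVal} {e : PVal → Bool} {s₁ s₂ : Stmt} :
      e ε = true → Step π (ε, Stmt.ifte e s₁ s₂) 1 (ε, s₁)
  | iteF {ε : PVal} {e : PVal → Bool} {s₁ s₂ : Stmt} :
      e ε = false → Step π (ε, Stmt.ifte e s₁ s₂) 1 (ε, s₂)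
  | whileT {ε : PVal} {e : PVal → Bool} {s : Stmt} :
      e ε = true →
        Step π (ε, Stmt.whileLoop e s) 1 (ε, Stmt.seq s (Stmt.whileLoop e s))
  | whileF {ε : PVal} {e : PVal → Bool} {s : Stmt} :
      e ε = false → Step π (ε, Stmt.whileLoop e s) 1 (ε, Stmt.skip)

/-- Finite paths under a policy `π` from a state to a final state. -/
inductive MPath (π : Policy) : PState → Type
  | nil (ε : PVal) : MPath π (ε, Stmt.skip)
  | cons {σ σ' : PState} (p : ℝ) (h : Step π σ p σ') (rest : MPath π σ') : MPath π σ

/-- The probability of a path: the product of its transition probabilities. -/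
noncomputable def MPath.prob {π : Policy} : {σ : PState} → MPath π σ → ℝ
  | _, .nil _ => 1
  | _, .cons p _ rest => p * rest.prob

/-- The valuation in the final state of a path. -/
def MPath.finalVal {π : Policy} : {σ : PState} → MPath π σ → PVal
  | _, .nil ε => ε
  | _, .cons _ _ rest => rest.finalVal

/-- Expected reward `E_{σ,π} r`: the sum over all paths from σ under π of the
    probability of the path times the reward of its final valuation. -/
noncomputable def expReward (π : Policy) (σ : PState) (r : PVal → ℝ) : ℝ :=
  ∑' ρ : MPath π σ, ρ.prob * r ρ.finalVal

/-- Expectation `𝔼_σ r`: infimum over all policies of the expected reward. -/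
noncomputable def expectation (σ : PState) (r : PVal → ℝ) : ℝ :=
  ⨅ π : Policy, expReward π σ r

open Classical in
/-- Characteristic (indicator) function of a proposition. -/
noncomputable def ind (P : Prop) : ℝ := if P then 1 else 0

/-- Formulae of probabilistic dynamic logic pDL. Atomic formulae are embedded
    shallowly as predicates over the program valuation and logical environment. -/
inductive Formula : Type
  | atom (A : PVal → LEnv → Prop) : Formula
  | neg (φ : Formula) : Formula
  | conj (φ₁ φ₂ : Formula) : Formula
  /-- universal quantification over the logical variable `l` (domain ℝ) -/
  | all (l : String) (φ : Formula) : Formula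
  /-- the p-box modality `[s]_p φ` -/
  | box (s : Stmt) (p : PVal → ℝ) (φ : Formula) : Formula

/-- Satisfaction `ε, η ⊨ φ` of pDL formulae. -/
def Sat : Formula → PVal → LEnv → Prop
  | .atom A, ε, η => A ε η
  | .neg φ, ε, η => ¬ Sat φ ε η
  | .conj φ₁ φ₂, ε, η => Sat φ₁ ε η ∧ Sat φ₂ ε η
  | .all l φ, ε, η => ∀ v : ℝ, Sat φ ε (Function.update η l v)
  | .box s p φ, ε, η => p ε ≤ expectation (ε, s) (fun ε' => ind (Sat φ ε' η))

/-- Disjunction `φ₁ ∨ φ₂ := ¬(¬φ₁ ∧ ¬φ₂)`. -/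
def Formula.disj (φ₁ φ₂ : Formula) : Formula := .neg (.conj (.neg φ₁) (.neg φ₂))

/-- Existential quantification `∃l·φ := ¬∀l·¬φ`. -/
def Formula.ex (l : String) (φ : Formula) : Formula := .neg (.all l (.neg φ))

/-- A program is purely probabilistic if it contains no demonic choice. -/
def DemFree : Stmt → Prop
  | .skip => True
  | .assign _ _ => True
  | .seq s₁ s₂ => DemFree s₁ ∧ DemFree s₂
  | .dem _ _ => False
  | .prob _ s₁ s₂ => DemFree s₁ ∧ DemFree s₂
  | .ifte _ s₁ s₂ => DemFree s₁ ∧ DemFree s₂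
  | .whileLoop _ s => DemFree s

end PGCL

open PGCL


namespace PGCL

theorem step_nonneg {π : Policy} {σ σ' : PState} {p : ℝ} (h : Step π σ p σ') : 0 ≤ p := by
  induction h with
  | assign => exact zero_le_one
  | seqSkip _ ih => exact ih
  | seqStep _ ih => exact ih
  | probL h0 h1 => exact h0
  | probR h0 h1 => linarith
  | demL _ => exact zero_le_one
  | demR _ => exact zero_le_one
  | iteT _ => exact zero_le_one
  | iteF _ => exact zero_le_one
  | whileT _ => exact zero_le_one
  | whileF _ => exact zero_le_one

theorem no_step_skip {π : Policy} {ε : PVal} {p : ℝ} {σ' : PState}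
    (h : Step π (ε, Stmt.skip) p σ') : False := by cases h

/-- Sum of probabilities of any finite set of distinct outgoing transitions is ≤ 1. -/
theorem steps_sum_le_one (π : Policy) (s : Stmt) :
    ∀ (ε : PVal) (T : Finset (ℝ × PState)),
      (∀ t ∈ T, Step π (ε, s) t.1 t.2) → ∑ t ∈ T, t.1 ≤ 1 := by
  classical
  induction s with
  | skip =>
    intro ε T hT
    have : T = ∅ := Finset.eq_empty_of_forall_notMem fun t ht => no_step_skip (hT t ht)
    simp [this]
  | assign x e =>
    intro ε T hT
    have hsub : T ⊆ {((1 : ℝ), (Function.update ε x (e ε), Stmt.skip))} := by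
      rintro ⟨q, τ⟩ ht
      cases hT _ ht
      exact Finset.mem_singleton.mpr rfl
    rcases Finset.subset_singleton_iff.mp hsub with h | h <;> simp [h]
  | seq s₁ s₂ ih₁ ih₂ =>
    intro ε T hT
    by_cases h1 : s₁ = Stmt.skip
    · subst h1
      refine ih₂ ε T fun t ht => ?_
      obtain ⟨q, τ⟩ := t
      cases hT _ ht with
      | seqSkip h => exact h
      | seqStep h => exact absurd h (fun h => no_step_skip h)
    · -- every step is a seqStep; strip the trailing s₂
      set f : ℝ × PState → ℝ × PState := fun t =>
        (t.1, (t.2.1, match t.2.2 with | Stmt.seq a _ => a | u => u)) with hf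
      have hinj : Set.InjOn f T := by
        rintro ⟨q₁, τ₁⟩ ht₁ ⟨q₂, τ₂⟩ ht₂ heq
        cases hT _ ht₁ with
        | seqSkip h => exact absurd rfl h1
        | seqStep hstep₁ =>
          cases hT _ ht₂ with
          | seqSkip h => exact absurd rfl h1
          | seqStep hstep₂ =>
            simp only [hf, Prod.mk.injEq] at heq
            obtain ⟨e1, e2, e3⟩ := heq
            exact Prod.ext e1 (Prod.ext e2 (by rw [e3]))
      have hsum : ∑ t ∈ T, t.1 = ∑ t ∈ T.image f, t.1 := by
        rw [Finset.sum_image (fun a ha b hb => hinj ha hb)]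
      rw [hsum]
      refine ih₁ ε (T.image f) fun t ht => ?_
      rcases Finset.mem_image.mp ht with ⟨u, hu, rfl⟩
      obtain ⟨q, τ⟩ := u
      cases hT _ hu with
      | seqSkip h => exact absurd rfl h1
      | seqStep hstep => exact hstep
  | dem s₁ s₂ ih₁ ih₂ =>
    intro ε T hT
    by_cases hπ : π (ε, Stmt.dem s₁ s₂) = true
    · have hsub : T ⊆ {((1 : ℝ), (ε, s₁))} := by
        rintro ⟨q, τ⟩ ht
        cases hT _ ht with
        | demL _ => exact Finset.mem_singleton.mpr rfl
        | demR h => rw [hπ] at h; exact absurd h (by simp)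
      rcases Finset.subset_singleton_iff.mp hsub with h | h <;> simp [h]
    · have hsub : T ⊆ {((1 : ℝ), (ε, s₂))} := by
        rintro ⟨q, τ⟩ ht
        cases hT _ ht with
        | demL h => exact absurd h hπ
        | demR _ => exact Finset.mem_singleton.mpr rfl
      rcases Finset.subset_singleton_iff.mp hsub with h | h <;> simp [h]
  | prob e s₁ s₂ ih₁ ih₂ =>
    intro ε T hT
    rcases T.eq_empty_or_nonempty with rfl | ⟨t₀, ht₀⟩
    · simp
    · have hbound : 0 ≤ e ε ∧ e ε ≤ 1 := by
        obtain ⟨q, τ⟩ := t₀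
        cases hT _ ht₀ with
        | probL h0 h1 => exact ⟨h0, h1⟩
        | probR h0 h1 => exact ⟨h0, h1⟩
      obtain ⟨h0, h1⟩ := hbound
      set u : ℝ × PState := (e ε, (ε, s₁)) with hu
      set v : ℝ × PState := (1 - e ε, (ε, s₂)) with hv
      have hsub : T ⊆ insert u {v} := by
        rintro ⟨q, τ⟩ ht
        cases hT _ ht with
        | probL _ _ => exact Finset.mem_insert.mpr (Or.inl rfl)
        | probR _ _ => exact Finset.mem_insert.mpr (Or.inr (Finset.mem_singleton.mpr rfl))
      calc ∑ t ∈ T, t.1 ≤ ∑ t ∈ insert u {v}, t.1 := by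
            refine Finset.sum_le_sum_of_subset_of_nonneg hsub fun t ht _ => ?_
            simp only [Finset.mem_insert, Finset.mem_singleton] at ht
            rcases ht with rfl | rfl
            · exact h0
            · simp [hv]; linarith
        _ ≤ 1 := by
            by_cases huv : u = v
            · rw [Finset.insert_eq_self.mpr (by simp [huv])]
              simpa [hv] using h0
            · rw [Finset.sum_insert (by simpa using huv), Finset.sum_singleton]
              simp [hu, hv]
  | ifte e s₁ s₂ ih₁ ih₂ =>
    intro ε T hT
    by_cases he : e ε = true
    · have hsub : T ⊆ {((1 : ℝ), (ε, s₁))} := by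
        rintro ⟨q, τ⟩ ht
        cases hT _ ht with
        | iteT _ => exact Finset.mem_singleton.mpr rfl
        | iteF h => rw [he] at h; exact absurd h (by simp)
      rcases Finset.subset_singleton_iff.mp hsub with h | h <;> simp [h]
    · have hsub : T ⊆ {((1 : ℝ), (ε, s₂))} := by
        rintro ⟨q, τ⟩ ht
        cases hT _ ht with
        | iteT h => exact absurd h he
        | iteF _ => exact Finset.mem_singleton.mpr rfl
      rcases Finset.subset_singleton_iff.mp hsub with h | h <;> simp [h]
  | whileLoop e s ih =>
    intro ε T hT
    by_cases he : e ε = true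
    · have hsub : T ⊆ {((1 : ℝ), (ε, Stmt.seq s (Stmt.whileLoop e s)))} := by
        rintro ⟨q, τ⟩ ht
        cases hT _ ht with
        | whileT _ => exact Finset.mem_singleton.mpr rfl
        | whileF h => rw [he] at h; exact absurd h (by simp)
      rcases Finset.subset_singleton_iff.mp hsub with h | h <;> simp [h]
    · have hsub : T ⊆ {((1 : ℝ), (ε, Stmt.skip))} := by
        rintro ⟨q, τ⟩ ht
        cases hT _ ht with
        | whileT h => exact absurd h he
        | whileF _ => exact Finset.mem_singleton.mpr rfl
      rcases Finset.subset_singleton_iff.mp hsub with h | h <;> simp [h]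

end PGCL

namespace PGCL
variable {π : Policy}

def MPath.length : {σ : PState} → MPath π σ → ℕ
  | _, .nil _ => 0
  | _, .cons _ _ rest => rest.length + 1

theorem MPath.prob_nonneg : ∀ {σ : PState} (ρ : MPath π σ), 0 ≤ ρ.prob
  | _, .nil _ => zero_le_one
  | _, .cons _ h rest => mul_nonneg (step_nonneg h) rest.prob_nonneg

/-- The first transition (probability, target state) of a path; junk for `nil`. -/
def MPath.hd : {σ : PState} → MPath π σ → ℝ × PState
  | _, .nil ε => (0, (ε, Stmt.skip))
  | _, @MPath.cons _ _ σ' p _ _ => (p, σ')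

/-- The tail of a path whose head is `(p, σ')`. -/
def MPath.tl {p : ℝ} {σ' : PState} :
    {σ : PState} → (ρ : MPath π σ) → ρ.hd = (p, σ') → σ.2 ≠ Stmt.skip → MPath π σ'
  | _, .nil _, _, hne => absurd rfl hne
  | _, @MPath.cons _ _ τ q h rest, hh, _ => (show τ = σ' from congrArg Prod.snd hh) ▸ rest

theorem MPath.tl_spec {p : ℝ} {σ' : PState} :
    ∀ {σ : PState} (ρ : MPath π σ) (hh : ρ.hd = (p, σ')) (hne : σ.2 ≠ Stmt.skip),
      ρ.prob = p * (ρ.tl hh hne).prob ∧ (ρ.tl hh hne).length + 1 = ρ.length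
  | _, .nil _, _, hne => absurd rfl hne
  | _, @MPath.cons _ _ τ q h rest, hh, hne => by
      have hτ : τ = σ' := congrArg Prod.snd hh
      subst hτ
      have hq : q = p := congrArg Prod.fst hh
      subst hq
      exact ⟨rfl, rfl⟩

theorem MPath.tl_inj {p : ℝ} {σ' : PState} {σ : PState} (ρ₁ ρ₂ : MPath π σ)
    (h₁ : ρ₁.hd = (p, σ')) (h₂ : ρ₂.hd = (p, σ')) (hne : σ.2 ≠ Stmt.skip)
    (heq : ρ₁.tl h₁ hne = ρ₂.tl h₂ hne) : ρ₁ = ρ₂ := by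
  cases ρ₁ with
  | nil ε => exact absurd rfl hne
  | cons q₁ s₁ r₁ =>
    rename_i τ₁
    cases ρ₂ with
    | nil => exact absurd rfl hne
    | cons q₂ s₂ r₂ =>
      rename_i τ₂
      have hτ₁ : τ₁ = σ' := congrArg Prod.snd h₁
      subst hτ₁
      have hτ₂ : τ₂ = τ₁ := congrArg Prod.snd h₂
      subst hτ₂
      have hq₁ : q₁ = p := congrArg Prod.fst h₁
      subst hq₁
      have hq₂ : q₂ = q₁ := congrArg Prod.fst h₂
      subst hq₂
      have hr : r₁ = r₂ := heq
      rw [hr]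

theorem paths_sum_le_one (π : Policy) :
    ∀ (n : ℕ) (σ : PState) (F : Finset (MPath π σ)),
      (∀ ρ ∈ F, ρ.length ≤ n) → ∑ ρ ∈ F, ρ.prob ≤ 1 := by
  classical
  intro n
  induction n with
  | zero =>
    intro σ F hF
    obtain ⟨ε, s⟩ := σ
    by_cases hs : s = Stmt.skip
    · subst hs
      have hsub : F ⊆ {MPath.nil ε} := fun ρ hρ => by
        cases ρ with
        | nil => exact Finset.mem_singleton.mpr rfl
        | cons q h rest => exact (no_step_skip h).elim
      rcases Finset.subset_singleton_iff.mp hsub with h | h <;> simp [h, MPath.prob]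
    · have hF0 : F = ∅ := Finset.eq_empty_of_forall_notMem fun ρ hρ => by
        cases ρ with
        | nil => exact hs rfl
        | cons q h rest => simpa [MPath.length] using hF _ hρ
      simp [hF0]
  | succ n ih =>
    intro σ F hF
    obtain ⟨ε, s⟩ := σ
    by_cases hs : s = Stmt.skip
    · subst hs
      have hsub : F ⊆ {MPath.nil ε} := fun ρ hρ => by
        cases ρ with
        | nil => exact Finset.mem_singleton.mpr rfl
        | cons q h rest => exact (no_step_skip h).elim
      rcases Finset.subset_singleton_iff.mp hsub with h | h <;> simp [h, MPath.prob]
    · set T : Finset (ℝ × PState) := F.image MPath.hd with hT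
      have hmap : ∀ ρ ∈ F, ρ.hd ∈ T := fun ρ hρ => Finset.mem_image_of_mem _ hρ
      have hkey : ∑ ρ ∈ F, ρ.prob
          = ∑ t ∈ T, ∑ ρ ∈ F.filter (fun ρ => ρ.hd = t), ρ.prob :=
        (Finset.sum_fiberwise_of_maps_to hmap _).symm
      have hstepT : ∀ t ∈ T, Step π (ε, s) t.1 t.2 := by
        intro t ht
        rcases Finset.mem_image.mp ht with ⟨ρ, hρ, rfl⟩
        cases ρ with
        | nil => exact absurd rfl hs
        | cons q h rest => exact h
      have hfiber : ∀ t ∈ T, ∑ ρ ∈ F.filter (fun ρ => ρ.hd = t), ρ.prob ≤ t.1 := by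
        intro t ht
        obtain ⟨p, σ'⟩ := t
        have hstep := hstepT _ ht
        set G := F.filter (fun ρ => ρ.hd = (p, σ')) with hG
        have hGmem : ∀ ρ ∈ G, ρ.hd = (p, σ') := fun ρ hρ => (Finset.mem_filter.mp hρ).2
        have hne : ((ε, s) : PState).2 ≠ Stmt.skip := hs
        have hsplit : ∑ ρ ∈ G, ρ.prob
            = p * ∑ x ∈ G.attach, ((x.1).tl (hGmem _ x.2) hne).prob := by
          rw [Finset.mul_sum, ← Finset.sum_attach G (fun ρ => ρ.prob)]
          exact Finset.sum_congr rfl fun x _ => ((x.1).tl_spec (hGmem _ x.2) hne).1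
        have htail : ∑ x ∈ G.attach, ((x.1).tl (hGmem _ x.2) hne).prob ≤ 1 := by
          rw [← Finset.sum_image (g := fun x : {ρ // ρ ∈ G} => (x.1).tl (hGmem _ x.2) hne)
            (f := MPath.prob) ?_]
          · refine ih σ' _ ?_
            intro τ hτ
            rcases Finset.mem_image.mp hτ with ⟨x, hx, rfl⟩
            have hlen := ((x.1).tl_spec (hGmem _ x.2) hne).2
            have hF' : (x.1).length ≤ n + 1 := hF _ (Finset.mem_of_mem_filter _ x.2)
            omega
          · intro a _ b _ heq
            exact Subtype.ext (MPath.tl_inj _ _ _ _ _ heq)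
        calc ∑ ρ ∈ G, ρ.prob
            = p * ∑ x ∈ G.attach, ((x.1).tl (hGmem _ x.2) hne).prob := hsplit
          _ ≤ p := mul_le_of_le_one_right (step_nonneg hstep) htail
      calc ∑ ρ ∈ F, ρ.prob
          = ∑ t ∈ T, ∑ ρ ∈ F.filter (fun ρ => ρ.hd = t), ρ.prob := hkey
        _ ≤ ∑ t ∈ T, t.1 := Finset.sum_le_sum hfiber
        _ ≤ 1 := steps_sum_le_one π s ε T hstepT

theorem summable_prob (π : Policy) (σ : PState) :
    Summable (fun ρ : MPath π σ => ρ.prob) :=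
  summable_of_sum_le (fun ρ => MPath.prob_nonneg ρ)
    (fun F => paths_sum_le_one π (F.sup MPath.length) σ F (fun _ hρ => Finset.le_sup hρ))

theorem expReward_nonneg (π : Policy) (σ : PState) {r : PVal → ℝ} (hr : ∀ v, 0 ≤ r v) :
    0 ≤ expReward π σ r :=
  tsum_nonneg fun ρ => mul_nonneg ρ.prob_nonneg (hr _)

theorem summable_reward (π : Policy) (σ : PState) {r : PVal → ℝ}
    (h0 : ∀ v, 0 ≤ r v) (h1 : ∀ v, r v ≤ 1) :
    Summable (fun ρ : MPath π σ => ρ.prob * r ρ.finalVal) :=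
  (summable_prob π σ).of_nonneg_of_le (fun ρ => mul_nonneg ρ.prob_nonneg (h0 _))
    (fun ρ => mul_le_of_le_one_right ρ.prob_nonneg (h1 _))

theorem expReward_mono (π : Policy) (σ : PState) {r₁ r₂ : PVal → ℝ}
    (h0 : ∀ v, 0 ≤ r₁ v) (hle : ∀ v, r₁ v ≤ r₂ v) (h1 : ∀ v, r₂ v ≤ 1) :
    expReward π σ r₁ ≤ expReward π σ r₂ :=
  Summable.tsum_le_tsum (fun ρ => mul_le_mul_of_nonneg_left (hle _) ρ.prob_nonneg)
    (summable_reward π σ h0 (fun v => (hle v).trans (h1 v)))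
    (summable_reward π σ (fun v => (h0 v).trans (hle v)) h1)

theorem expectation_mono (σ : PState) {r₁ r₂ : PVal → ℝ}
    (h0 : ∀ v, 0 ≤ r₁ v) (hle : ∀ v, r₁ v ≤ r₂ v) (h1 : ∀ v, r₂ v ≤ 1) :
    expectation σ r₁ ≤ expectation σ r₂ :=
  ciInf_mono ⟨0, by rintro x ⟨π, rfl⟩; exact expReward_nonneg π σ h0⟩
    (fun π => expReward_mono π σ h0 hle h1)

theorem ind_nonneg (P : Prop) : 0 ≤ ind P := by
  unfold ind; split <;> norm_num

theorem ind_le_one (P : Prop) : ind P ≤ 1 := by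
  unfold ind; split <;> norm_num

theorem ind_mono {A B : Prop} (h : A → B) : ind A ≤ ind B := by
  unfold ind
  split
  · rename_i hA
    rw [if_pos (h hA)]
  · exact (ind_nonneg B).trans_eq rfl

end PGCL

/-- The existential quantifier commutes into the p-box:
    if `ε ⊨ ∃l·[s]_p φ` then `ε ⊨ [s]_p (∃l·φ)`. -/
theorem exists_into_pbox (ε : PVal) (η : LEnv) (s : Stmt) (φ : Formula)
    (l : String) (p : PVal → ℝ) (hp : ∀ ε', p ε' ∈ Set.Icc (0 : ℝ) 1)
    (h : Sat (Formula.ex l (.box s p φ)) ε η) :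
    Sat (.box s p (Formula.ex l φ)) ε η := by
  have h' : ∃ v : ℝ, p ε ≤ expectation (ε, s)
      (fun ε' => ind (Sat φ ε' (Function.update η l v))) := by
    simp only [Formula.ex, Sat] at h
    push_neg at h
    exact h
  obtain ⟨v, hv⟩ := h'
  show p ε ≤ expectation (ε, s) (fun ε' => ind (Sat (Formula.ex l φ) ε' η))
  refine hv.trans (expectation_mono _ (fun w => ind_nonneg _)
    (fun w => ind_mono ?_) (fun w => ind_le_one _))
  intro hw
  simp only [Formula.ex, Sat]
  intro hall
  exact hall v hw
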